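/- With D(ρ) = γ_A(τ_A ⊗ tr_A(ρ) − ρ) + γ_B(tr_B(ρ) ⊗ τ_B − ρ) for γ_A, γ_B > 0, the spectrum of the linear map D on B(H_A⊗H_C⊗H_B) is contained in {0, −γ_A, −γ_B, −(γ_A+γ_B)}, and D is diagonalizable. -/

import Mathlib

open Matrix
open scoped ComplexOrder

/-- `P(ρ) = τ_A ⊗ tr_A(ρ)` on `B(H_A ⊗ H_C ⊗ H_B)`. -/
noncomputable def resetA {A C B : Type*} [Fintype A]
    (τA : Matrix A A ℂ) (ρ : Matrix (A × C × B) (A × C × B) ℂ) :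
    Matrix (A × C × B) (A × C × B) ℂ :=
  Matrix.of fun p q => τA p.1 q.1 * ∑ x, ρ (x, p.2) (x, q.2)

/-- `Q(ρ) = tr_B(ρ) ⊗ τ_B` on `B(H_A ⊗ H_C ⊗ H_B)`. -/
noncomputable def resetB {A C B : Type*} [Fintype B]
    (τB : Matrix B B ℂ) (ρ : Matrix (A × C × B) (A × C × B) ℂ) :
    Matrix (A × C × B) (A × C × B) ℂ :=
  Matrix.of fun p q => (∑ y, ρ (p.1, p.2.1, y) (q.1, q.2.1, y)) * τB p.2.2 q.2.2

/-- The reset dissipator `D(ρ) = γ_A(τ_A ⊗ tr_A(ρ) − ρ) + γ_B(tr_B(ρ) ⊗ τ_B − ρ)` has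
spectrum contained in `{0, −γ_A, −γ_B, −(γ_A+γ_B)}` and is diagonalizable. -/
lemma resetA_idem {A C B : Type*} [Fintype A] {τA : Matrix A A ℂ}
    (h : τA.trace = 1) (ρ : Matrix (A × C × B) (A × C × B) ℂ) :
    resetA τA (resetA τA ρ) = resetA τA ρ := by
  ext p q
  simp only [resetA, Matrix.of_apply]
  rw [← Finset.sum_mul]
  have htr : (∑ x : A, τA x x) = 1 := h
  rw [htr, one_mul]

lemma resetB_idem {A C B : Type*} [Fintype B] {τB : Matrix B B ℂ}
    (h : τB.trace = 1) (ρ : Matrix (A × C × B) (A × C × B) ℂ) :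
    resetB τB (resetB τB ρ) = resetB τB ρ := by
  ext p q
  simp only [resetB, Matrix.of_apply]
  rw [← Finset.mul_sum]
  have htr : (∑ y : B, τB y y) = 1 := h
  rw [htr, mul_one]

lemma resetA_resetB_comm {A C B : Type*} [Fintype A] [Fintype B]
    (τA : Matrix A A ℂ) (τB : Matrix B B ℂ)
    (ρ : Matrix (A × C × B) (A × C × B) ℂ) :
    resetA τA (resetB τB ρ) = resetB τB (resetA τA ρ) := by
  ext p q
  simp only [resetA, resetB, Matrix.of_apply, Finset.mul_sum, Finset.sum_mul]
  ring_nf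
  rw [Finset.sum_comm]
  exact Finset.sum_congr rfl fun _ _ => Finset.sum_congr rfl fun _ _ => by ring


noncomputable def resetALM (A C B : Type*) [Fintype A] (τA : Matrix A A ℂ) :
    Module.End ℂ (Matrix (A × C × B) (A × C × B) ℂ) where
  toFun := resetA τA
  map_add' ρ σ := by
    ext p q
    simp [resetA, Finset.sum_add_distrib, mul_add]
  map_smul' c ρ := by
    ext p q
    simp only [resetA, Matrix.of_apply, Matrix.smul_apply, smul_eq_mul, RingHom.id_apply,
      Finset.mul_sum]
    exact Finset.sum_congr rfl fun _ _ => by ring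

noncomputable def resetBLM (A C B : Type*) [Fintype B] (τB : Matrix B B ℂ) :
    Module.End ℂ (Matrix (A × C × B) (A × C × B) ℂ) where
  toFun := resetB τB
  map_add' ρ σ := by
    ext p q
    simp [resetB, Finset.sum_add_distrib, add_mul]
  map_smul' c ρ := by
    ext p q
    simp only [resetB, Matrix.of_apply, Matrix.smul_apply, smul_eq_mul, RingHom.id_apply]
    rw [← Finset.mul_sum]
    ring

theorem stmt8 {A C B : Type*} [Fintype A] [Fintype B] [Fintype C]
    (τA : Matrix A A ℂ) (hτA : τA.PosSemidef) (hτAtr : τA.trace = 1)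
    (τB : Matrix B B ℂ) (hτB : τB.PosSemidef) (hτBtr : τB.trace = 1)
    (γA γB : ℝ) (hγA : 0 < γA) (hγB : 0 < γB)
    (D : Module.End ℂ (Matrix (A × C × B) (A × C × B) ℂ))
    (hD : ∀ ρ, D ρ = γA • (resetA τA ρ - ρ) + γB • (resetB τB ρ - ρ)) :
    spectrum ℂ D ⊆ {0, -(γA : ℂ), -(γB : ℂ), -((γA : ℂ) + (γB : ℂ))} ∧
    (⨆ μ : ℂ, Module.End.eigenspace D μ) = ⊤ := by
  set P : Module.End ℂ (Matrix (A × C × B) (A × C × B) ℂ) := resetALM A C B τA with hPdef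
  set Q : Module.End ℂ (Matrix (A × C × B) (A × C × B) ℂ) := resetBLM A C B τB with hQdef
  have hD' : ∀ σ, D σ = (γA : ℂ) • (P σ - σ) + (γB : ℂ) • (Q σ - σ) := by
    intro σ
    have := hD σ
    simpa [P, Q, resetALM, resetBLM] using this
  have hPP' : ∀ σ, P (P σ) = P σ := fun σ => resetA_idem hτAtr σ
  have hQQ' : ∀ σ, Q (Q σ) = Q σ := fun σ => resetB_idem hτBtr σ
  have hPQ' : ∀ σ, P (Q σ) = Q (P σ) := fun σ => resetA_resetB_comm τA τB σ
  -- eigenvalue computations for the four components of any σ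
  have key : ∀ σ : Matrix (A × C × B) (A × C × B) ℂ,
      D (P (Q σ)) = (0 : ℂ) • (P (Q σ)) ∧
      D (Q σ - P (Q σ)) = (-(γA:ℂ)) • (Q σ - P (Q σ)) ∧
      D (P σ - P (Q σ)) = (-(γB:ℂ)) • (P σ - P (Q σ)) ∧
      D (σ - P σ - Q σ + P (Q σ)) = (-((γA:ℂ)+(γB:ℂ))) • (σ - P σ - Q σ + P (Q σ)) := by
    intro σ
    have hPv0 : P (P (Q σ)) = P (Q σ) := hPP' (Q σ)
    have hQv0 : Q (P (Q σ)) = P (Q σ) := by rw [← hPQ', hQQ']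
    refine ⟨?_, ?_, ?_, ?_⟩
    · rw [hD' (P (Q σ)), hPv0, hQv0]; simp
    · rw [hD' (Q σ - P (Q σ)), map_sub, map_sub, hPv0, hQQ', hQv0, hPQ']
      module
    · rw [hD' (P σ - P (Q σ)), map_sub, map_sub, hPP', hPv0, hQv0, ← hPQ']
      module
    · rw [hD' (σ - P σ - Q σ + P (Q σ)), map_add, map_sub, map_sub, map_add, map_sub, map_sub,
        hPP', hQQ', hPv0, hQv0, hPQ']
      module
  constructor
  · intro μ hμ
    have hev : Module.End.HasEigenvalue D μ :=
      (Module.End.hasEigenvalue_iff_mem_spectrum).mpr hμ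
    obtain ⟨ρ, hρv⟩ := hev.exists_hasEigenvector
    have hρmem := hρv.1
    have hρne := hρv.2
    have hDρ : D ρ = μ • ρ := Module.End.mem_eigenspace_iff.mp hρmem
    obtain ⟨h0, h1, h2, h3⟩ := key ρ
    -- D commutes with P and Q
    have hDP : ∀ σ, D (P σ) = P (D σ) := by
      intro σ
      rw [hD' (P σ), hD' σ, map_add, _root_.map_smul, _root_.map_smul, map_sub, map_sub, hPP', hPQ']
    have hDQ : ∀ σ, D (Q σ) = Q (D σ) := by
      intro σ
      rw [hD' (Q σ), hD' σ, map_add, _root_.map_smul, _root_.map_smul, map_sub, map_sub, hQQ', hPQ']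
    have m0 : D (P (Q ρ)) = μ • (P (Q ρ)) := by
      rw [hDP, hDQ, hDρ, _root_.map_smul, _root_.map_smul]
    have mP : D (P ρ) = μ • P ρ := by rw [hDP, hDρ, _root_.map_smul]
    have mQ : D (Q ρ) = μ • Q ρ := by rw [hDQ, hDρ, _root_.map_smul]
    have m1 : D (Q ρ - P (Q ρ)) = μ • (Q ρ - P (Q ρ)) := by
      rw [map_sub, m0, mQ, smul_sub]
    have m2 : D (P ρ - P (Q ρ)) = μ • (P ρ - P (Q ρ)) := by
      rw [map_sub, m0, mP, smul_sub]
    have m3 : D (ρ - P ρ - Q ρ + P (Q ρ)) = μ • (ρ - P ρ - Q ρ + P (Q ρ)) := by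
      rw [map_add, map_sub, map_sub, m0, mP, mQ, hDρ, smul_add, smul_sub, smul_sub]
    have hsum : P (Q ρ) + (Q ρ - P (Q ρ)) + (P ρ - P (Q ρ)) + (ρ - P ρ - Q ρ + P (Q ρ)) = ρ := by
      abel
    have hcase : ∀ (v : Matrix (A × C × B) (A × C × B) ℂ) (lam : ℂ),
        D v = μ • v → D v = lam • v → v ≠ 0 → μ = lam := by
      intro v lam hv1 hv2 hvne
      have hmu : μ • v = lam • v := hv1.symm.trans hv2
      have : (μ - lam) • v = 0 := by rw [sub_smul, hmu, sub_self]
      rcases smul_eq_zero.mp this with h | h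
      · exact sub_eq_zero.mp h
      · exact absurd h hvne
    by_cases c0 : P (Q ρ) = 0
    · by_cases c1 : Q ρ - P (Q ρ) = 0
      · by_cases c2 : P ρ - P (Q ρ) = 0
        · by_cases c3 : ρ - P ρ - Q ρ + P (Q ρ) = 0
          · exfalso
            apply hρne
            rw [← hsum, c1, c2, c3, c0]
            simp
          · have := hcase _ _ m3 h3 c3
            right; right; right; simpa using this
        · have := hcase _ _ m2 h2 c2
          right; right; left; simpa using this
      · have := hcase _ _ m1 h1 c1
        right; left; simpa using this
    · have := hcase _ _ m0 h0 c0
      left; simpa using this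
  · rw [eq_top_iff]
    intro ρ _
    obtain ⟨h0, h1, h2, h3⟩ := key ρ
    have e0 : P (Q ρ) ∈ Module.End.eigenspace D 0 :=
      Module.End.mem_eigenspace_iff.mpr h0
    have e1 : Q ρ - P (Q ρ) ∈ Module.End.eigenspace D (-(γA:ℂ)) :=
      Module.End.mem_eigenspace_iff.mpr h1
    have e2 : P ρ - P (Q ρ) ∈ Module.End.eigenspace D (-(γB:ℂ)) :=
      Module.End.mem_eigenspace_iff.mpr h2
    have e3 : ρ - P ρ - Q ρ + P (Q ρ) ∈ Module.End.eigenspace D (-((γA:ℂ)+(γB:ℂ))) :=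
      Module.End.mem_eigenspace_iff.mpr h3
    have hsum : P (Q ρ) + (Q ρ - P (Q ρ)) + (P ρ - P (Q ρ)) + (ρ - P ρ - Q ρ + P (Q ρ)) = ρ := by
      abel
    rw [← hsum]
    refine Submodule.add_mem _ (Submodule.add_mem _ (Submodule.add_mem _ ?_ ?_) ?_) ?_
    · exact le_iSup (fun μ : ℂ => Module.End.eigenspace D μ) 0 e0
    · exact le_iSup (fun μ : ℂ => Module.End.eigenspace D μ) (-(γA:ℂ)) e1
    · exact le_iSup (fun μ : ℂ => Module.End.eigenspace D μ) (-(γB:ℂ)) e2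
    · exact le_iSup (fun μ : ℂ => Module.End.eigenspace D μ) (-((γA:ℂ)+(γB:ℂ))) e3
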